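/- Let X ∈ ℝ^{d×n}, λ > 0, 1 ≤ p, q ≤ 2, and fix μ ∈ ℝ. The function Z ↦ Tr((ZᵀZ + μ²I)^{p/2}) + λ ∑_{i=1}^n (‖(XZ − X)_i‖_2² + μ²)^{q/2} is convex on ℝ^{n×n}. -/

import Mathlib

open Matrix

/-- Real power of a real symmetric matrix, defined through the spectral decomposition
`A = U · diag(λ₁,…,λₙ) · Uᵀ` as `A^r = U · diag(λ₁^r,…,λₙ^r) · Uᵀ`
(junk value `0` if `A` is not symmetric). -/
noncomputable def mpow {n : ℕ} (A : Matrix (Fin n) (Fin n) ℝ) (r : ℝ) :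
    Matrix (Fin n) (Fin n) ℝ :=
  if hA : A.IsHermitian then hA.cfc (fun x : ℝ => x ^ r) else 0

/-- The smoothed LRR objective
`J(Z, μ) = Tr((ZᵀZ + μ²I)^{p/2}) + λ·∑ᵢ (‖(XZ − X)ᵢ‖₂² + μ²)^{q/2}`,
where `(XZ − X)ᵢ` denotes the `i`-th column of `XZ − X`. -/
noncomputable def smoothJ {d n : ℕ} (X : Matrix (Fin d) (Fin n) ℝ) (lam p q : ℝ)
    (Z : Matrix (Fin n) (Fin n) ℝ) (μ : ℝ) : ℝ :=
  (mpow (Zᵀ * Z + μ ^ 2 • (1 : Matrix (Fin n) (Fin n) ℝ)) (p / 2)).trace +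
    lam * ∑ i, (∑ j, ((X * Z - X) j i) ^ 2 + μ ^ 2) ^ (q / 2)

namespace SmoothLRR

open Finset

/-! ### Generic lemmas on the functional calculus of real Hermitian matrices -/

variable {m : Type*} [Fintype m] [DecidableEq m]

lemma cfc_trace {A : Matrix m m ℝ} (hA : A.IsHermitian) (f : ℝ → ℝ) :
    (hA.cfc f).trace = ∑ i, f (hA.eigenvalues i) := by
  rw [Matrix.IsHermitian.cfc, Unitary.conjStarAlgAut_apply, Matrix.trace_mul_cycle,
    Unitary.star_mul_self_of_mem (SetLike.coe_mem _), one_mul, Matrix.trace_diagonal]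
  simp [RCLike.ofReal_real_eq_id]

lemma cfc_mul {A : Matrix m m ℝ} (hA : A.IsHermitian) (f g : ℝ → ℝ) :
    hA.cfc f * hA.cfc g = hA.cfc (fun x => f x * g x) := by
  have h : ∀ {a b c d e f : Matrix m m ℝ},
      (a * b * c) * (d * e * f) = a * (b * (c * d) * e) * f := by
    intros; simp only [mul_assoc]
  rw [Matrix.IsHermitian.cfc, Matrix.IsHermitian.cfc, Matrix.IsHermitian.cfc]
  simp only [Unitary.conjStarAlgAut_apply]
  rw [h,
    Unitary.star_mul_self_of_mem (SetLike.coe_mem _), mul_one, diagonal_mul_diagonal]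
  congr 1

lemma cfc_id {A : Matrix m m ℝ} (hA : A.IsHermitian) :
    hA.cfc (fun x => x) = A := by
  rw [Matrix.IsHermitian.cfc]
  exact hA.spectral_theorem.symm

lemma cfc_one {A : Matrix m m ℝ} (hA : A.IsHermitian) :
    hA.cfc (fun _ => 1) = 1 := by
  rw [Matrix.IsHermitian.cfc]
  have : diagonal (RCLike.ofReal ∘ (fun _ : ℝ => (1:ℝ)) ∘ hA.eigenvalues)
      = (1 : Matrix m m ℝ) := by
    simp [Function.comp_def, diagonal_one]
  rw [this, Unitary.conjStarAlgAut_apply, mul_one, Unitary.mul_star_self_of_mem (SetLike.coe_mem _)]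

lemma cfc_pow {A : Matrix m m ℝ} (hA : A.IsHermitian) (f : ℝ → ℝ) (k : ℕ) :
    hA.cfc (fun x => f x ^ k) = (hA.cfc f) ^ k := by
  induction k with
  | zero => simpa using cfc_one hA
  | succ k ih =>
    rw [pow_succ, ← ih, cfc_mul]
    simp only [← pow_succ]

lemma trace_pow_eq {A : Matrix m m ℝ} (hA : A.IsHermitian) (k : ℕ) :
    (A ^ k).trace = ∑ i, hA.eigenvalues i ^ k := by
  have := cfc_pow hA (fun x => x) k
  rw [cfc_id] at this
  rw [← this, cfc_trace]

/-- **Peierls' inequality**. -/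
lemma peierls {A : Matrix m m ℝ} (hA : A.IsHermitian) {f : ℝ → ℝ}
    (hf : ConvexOn ℝ Set.univ f) (V : Matrix m m ℝ) (hV : star V * V = 1) :
    ∑ i, f ((star V * A * V) i i) ≤ ∑ i, f (hA.eigenvalues i) := by
  classical
  set U : Matrix m m ℝ := (hA.eigenvectorUnitary : Matrix m m ℝ) with hU
  have hUu : star U * U = 1 := Unitary.star_mul_self_of_mem (SetLike.coe_mem _)
  have hUu' : U * star U = 1 := Unitary.mul_star_self_of_mem (SetLike.coe_mem _)
  have hVV' : V * star V = 1 := mul_eq_one_comm.mp hV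
  set W : Matrix m m ℝ := star U * V with hW
  set e : m → ℝ := hA.eigenvalues with he
  have hWW : star W * W = 1 := by
    rw [hW, Matrix.star_mul, star_star, mul_assoc, ← mul_assoc U, hUu', one_mul, hV]
  have hWW' : W * star W = 1 := mul_eq_one_comm.mp hWW
  have hent : ∀ i, (star V * A * V) i i = ∑ j, (W j i)^2 * e j := by
    intro i
    have hA' : A = U * diagonal e * star U := by
      have := hA.spectral_theorem
      simpa [RCLike.ofReal_real_eq_id, Function.comp_def] using this
    have : star V * A * V = star W * diagonal e * W := by
      rw [hA', hW, Matrix.star_mul, star_star]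
      simp only [mul_assoc]
    rw [this]
    simp only [Matrix.mul_apply, Matrix.diagonal_apply, star_apply, star_trivial]
    simp only [Finset.sum_ite_eq', Finset.mem_univ, if_true, mul_ite, mul_zero,
      Finset.sum_ite_eq, ite_mul, zero_mul]
    congr 1 with j
    ring
  have hw1 : ∀ i, ∑ j, (W j i)^2 = 1 := by
    intro i
    have := congrFun (congrFun hWW i) i
    simp only [Matrix.mul_apply, star_apply, star_trivial, Matrix.one_apply_eq] at this
    rw [← this]
    congr 1 with j
    ring
  calc ∑ i, f ((star V * A * V) i i)
      = ∑ i, f (∑ j, (W j i)^2 • e j) := by simp only [hent, smul_eq_mul]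
    _ ≤ ∑ i, ∑ j, (W j i)^2 • f (e j) := by
        refine Finset.sum_le_sum fun i _ => ?_
        exact hf.map_sum_le (fun j _ => sq_nonneg _) (hw1 i) (fun j _ => trivial)
    _ = ∑ j, (∑ i, (W j i)^2) * f (e j) := by
        rw [Finset.sum_comm]
        simp [Finset.sum_mul, smul_eq_mul]
    _ = ∑ j, f (e j) := by
        refine Finset.sum_congr rfl fun j _ => ?_
        have := congrFun (congrFun hWW' j) j
        simp only [Matrix.mul_apply, star_apply, star_trivial, Matrix.one_apply_eq] at this
        have h2 : ∑ i, (W j i)^2 = 1 := by rw [← this]; congr 1 with i; ring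
        rw [h2, one_mul]

/-- Convexity of the trace of a convex function of a Hermitian matrix. -/
lemma trace_cfc_convex {A B C : Matrix m m ℝ} (hA : A.IsHermitian) (hB : B.IsHermitian)
    (hC : C.IsHermitian) {a b : ℝ} (ha : 0 ≤ a) (hb : 0 ≤ b) (hab : a + b = 1)
    (hCeq : C = a • A + b • B) {f : ℝ → ℝ} (hf : ConvexOn ℝ Set.univ f) :
    (hC.cfc f).trace ≤ a * (hA.cfc f).trace + b * (hB.cfc f).trace := by
  classical
  set V : Matrix m m ℝ := (hC.eigenvectorUnitary : Matrix m m ℝ) with hVdef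
  have hV : star V * V = 1 := Unitary.star_mul_self_of_mem (SetLike.coe_mem _)
  have hdiag : star V * C * V = diagonal hC.eigenvalues := by
    have := hC.spectral_theorem
    rw [Unitary.conjStarAlgAut_apply] at this
    have h2 : star V * C * V
        = star V * (V * diagonal (RCLike.ofReal ∘ hC.eigenvalues) * star V) * V :=
      congrArg (fun M => star V * M * V) this
    rw [h2, show star V * (V * diagonal (RCLike.ofReal ∘ hC.eigenvalues) * star V) * V
        = (star V * V) * diagonal (RCLike.ofReal ∘ hC.eigenvalues) * (star V * V) by
      simp only [mul_assoc], hV, one_mul, mul_one]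
    simp [RCLike.ofReal_real_eq_id, Function.comp_def]
  have hsplit : ∀ i, (star V * C * V) i i
      = a * ((star V * A * V) i i) + b * ((star V * B * V) i i) := by
    intro i
    rw [hCeq]
    simp only [Matrix.mul_add, Matrix.add_mul, Matrix.mul_smul, Matrix.smul_mul,
      Matrix.add_apply, Matrix.smul_apply, smul_eq_mul]
  have h1 : (hC.cfc f).trace = ∑ i, f ((star V * C * V) i i) := by
    rw [cfc_trace, hdiag]
    simp
  rw [h1]
  calc ∑ i, f ((star V * C * V) i i)
      ≤ ∑ i, (a * f ((star V * A * V) i i) + b * f ((star V * B * V) i i)) := by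
        refine Finset.sum_le_sum fun i _ => ?_
        rw [hsplit i]
        have := hf.2 (Set.mem_univ ((star V * A * V) i i))
          (Set.mem_univ ((star V * B * V) i i)) ha hb hab
        simpa [smul_eq_mul] using this
    _ = a * ∑ i, f ((star V * A * V) i i) + b * ∑ i, f ((star V * B * V) i i) := by
        rw [Finset.sum_add_distrib, Finset.mul_sum, Finset.mul_sum]
    _ ≤ a * (hA.cfc f).trace + b * (hB.cfc f).trace := by
        rw [cfc_trace hA, cfc_trace hB]
        exact add_le_add (mul_le_mul_of_nonneg_left (peierls hA hf V hV) ha)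
          (mul_le_mul_of_nonneg_left (peierls hB hf V hV) hb)

/-! ### Families of reals with equal power sums -/

lemma sum_apply_eq_of_power_sums {ι κ : Type*} [Fintype ι] [Fintype κ]
    [DecidableEq ι] [DecidableEq κ]
    (a : ι → ℝ) (b : κ → ℝ)
    (h : ∀ k : ℕ, ∑ i, a i ^ k = ∑ j, b j ^ k) (g : ℝ → ℝ) :
    ∑ i, g (a i) = ∑ j, g (b j) := by
  classical
  have hP : ∀ P : Polynomial ℝ, ∑ i, P.eval (a i) = ∑ j, P.eval (b j) := by
    intro P
    induction P using Polynomial.induction_on' with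
    | add p q hp hq => simp only [Polynomial.eval_add, Finset.sum_add_distrib, hp, hq]
    | monomial k r => simp only [Polynomial.eval_monomial, ← Finset.mul_sum, h k]
  set S : Finset ℝ := Finset.image a Finset.univ ∪ Finset.image b Finset.univ with hS
  have haS : ∀ i, a i ∈ S := fun i =>
    Finset.mem_union_left _ (Finset.mem_image_of_mem a (Finset.mem_univ i))
  have hbS : ∀ j, b j ∈ S := fun j =>
    Finset.mem_union_right _ (Finset.mem_image_of_mem b (Finset.mem_univ j))
  have hcount : ∀ c ∈ S,
      ((Finset.univ.filter (fun i => a i = c)).card : ℝ)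
        = ((Finset.univ.filter (fun j => b j = c)).card : ℝ) := by
    intro c hc
    have hinj : Set.InjOn (id : ℝ → ℝ) S := fun x _ y _ hxy => hxy
    have key := hP (Lagrange.basis S id c)
    have ha' : ∀ i : ι, (Lagrange.basis S id c).eval (a i)
        = if a i = c then 1 else 0 := by
      intro i
      by_cases hic : a i = c
      · rw [if_pos hic, hic]
        simpa using Lagrange.eval_basis_self (s := S) (v := id) hinj hc
      · rw [if_neg hic]
        simpa using Lagrange.eval_basis_of_ne (s := S) (v := id) (i := c) (j := a i)
          (fun hcc => hic hcc.symm) (haS i)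
    have hb' : ∀ j : κ, (Lagrange.basis S id c).eval (b j)
        = if b j = c then 1 else 0 := by
      intro j
      by_cases hic : b j = c
      · rw [if_pos hic, hic]
        simpa using Lagrange.eval_basis_self (s := S) (v := id) hinj hc
      · rw [if_neg hic]
        simpa using Lagrange.eval_basis_of_ne (s := S) (v := id) (i := c) (j := b j)
          (fun hcc => hic hcc.symm) (hbS j)
    simp only [ha', hb', Finset.sum_ite_eq] at key
    rw [Finset.sum_boole, Finset.sum_boole] at key
    exact key
  calc ∑ i, g (a i)
      = ∑ c ∈ S, ∑ i ∈ Finset.univ.filter (fun i => a i = c), g (a i) :=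
        (Finset.sum_fiberwise_of_maps_to (fun i _ => haS i) _).symm
    _ = ∑ c ∈ S, ((Finset.univ.filter (fun i => a i = c)).card : ℝ) * g c := by
        refine Finset.sum_congr rfl fun c _ => ?_
        rw [Finset.sum_congr rfl (fun i hi => by
          rw [(Finset.mem_filter.mp hi).2]), Finset.sum_const, nsmul_eq_mul]
    _ = ∑ c ∈ S, ((Finset.univ.filter (fun j => b j = c)).card : ℝ) * g c :=
        Finset.sum_congr rfl fun c hc => by rw [hcount c hc]
    _ = ∑ c ∈ S, ∑ j ∈ Finset.univ.filter (fun j => b j = c), g (b j) := by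
        refine Finset.sum_congr rfl fun c _ => ?_
        rw [Finset.sum_congr rfl (fun j hj => by
          rw [(Finset.mem_filter.mp hj).2]), Finset.sum_const, nsmul_eq_mul]
    _ = ∑ j, g (b j) := Finset.sum_fiberwise_of_maps_to (fun j _ => hbS j) _

/-! ### Convexity helpers -/

lemma norm_affine_rpow_convex {M E : Type*} [AddCommGroup M] [Module ℝ M]
    [NormedAddCommGroup E] [NormedSpace ℝ E]
    (T : M →ₗ[ℝ] E) (c : E) {r : ℝ} (hr : 1 ≤ r) :
    ConvexOn ℝ Set.univ (fun z : M => ‖T z + c‖ ^ r) := by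
  have hr0 : (0:ℝ) ≤ r := le_trans zero_le_one hr
  refine ⟨convex_univ, fun x _ y _ a b ha hb hab => ?_⟩
  have haff : T (a • x + b • y) + c = a • (T x + c) + b • (T y + c) := by
    have h : a • (T x + c) + b • (T y + c) = T (a • x + b • y) + (a + b) • c := by
      rw [map_add, _root_.map_smul, _root_.map_smul, add_smul, smul_add, smul_add]; abel
    rw [h, hab, one_smul]
  have h1 : ‖T (a • x + b • y) + c‖ ≤ a * ‖T x + c‖ + b * ‖T y + c‖ := by
    rw [haff]
    refine le_trans (norm_add_le _ _) ?_
    rw [norm_smul, norm_smul, Real.norm_eq_abs, Real.norm_eq_abs, abs_of_nonneg ha,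
      abs_of_nonneg hb]
  have h2 : ‖T (a • x + b • y) + c‖ ^ r ≤ (a * ‖T x + c‖ + b * ‖T y + c‖) ^ r :=
    Real.rpow_le_rpow (norm_nonneg _) h1 hr0
  refine le_trans h2 ?_
  have := (convexOn_rpow hr).2 (Set.mem_Ici.mpr (norm_nonneg (T x + c)))
    (Set.mem_Ici.mpr (norm_nonneg (T y + c))) ha hb hab
  simpa [smul_eq_mul] using this

/-- Convexity of `x ↦ (x² + μ²) ^ (r/2)` for `1 ≤ r`. -/
lemma sq_add_rpow_convex (μ : ℝ) {r : ℝ} (hr : 1 ≤ r) :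
    ConvexOn ℝ Set.univ (fun x : ℝ => (x ^ 2 + μ ^ 2) ^ (r / 2)) := by
  have key : ∀ x : ℝ, (x ^ 2 + μ ^ 2) ^ (r / 2)
      = ‖(LinearMap.toSpanSingleton ℝ (EuclideanSpace ℝ (Fin 2))
          (EuclideanSpace.single 0 1)) x + EuclideanSpace.single 1 μ‖ ^ r := by
    intro x
    have hx : (LinearMap.toSpanSingleton ℝ (EuclideanSpace ℝ (Fin 2))
        (EuclideanSpace.single 0 1)) x + EuclideanSpace.single 1 μ
        = (EuclideanSpace.single 0 x + EuclideanSpace.single 1 μ) := by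
      congr 1
      ext j
      simp [LinearMap.toSpanSingleton_apply, EuclideanSpace.single_apply, mul_comm]
    set v : EuclideanSpace ℝ (Fin 2) :=
      EuclideanSpace.single 0 x + EuclideanSpace.single 1 μ with hv
    rw [hx, EuclideanSpace.norm_eq, Fin.sum_univ_two]
    have h0 : (0 : ℝ) ≤ x ^ 2 + μ ^ 2 := by positivity
    have hvv : ‖v 0‖ ^ 2 + ‖v 1‖ ^ 2 = x ^ 2 + μ ^ 2 := by
      simp [hv, EuclideanSpace.single_apply, Real.norm_eq_abs, sq_abs]
    rw [hvv, Real.sqrt_eq_rpow, ← Real.rpow_mul h0, show (1/(2:ℝ))*r = r/2 by ring]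
  simp only [key]
  exact norm_affine_rpow_convex _ _ hr

lemma convexOn_congr {M : Type*} [AddCommGroup M] [Module ℝ M] {s : Set M}
    {f g : M → ℝ} (h : ConvexOn ℝ s f) (hfg : ∀ x, f x = g x) : ConvexOn ℝ s g := by
  obtain ⟨hs, hh⟩ := h
  exact ⟨hs, fun x hx y hy a b ha hb hab => by
    rw [← hfg, ← hfg, ← hfg]; exact hh hx hy ha hb hab⟩

lemma convexOn_finset_sum {ι M : Type*} [AddCommGroup M] [Module ℝ M]
    (s : Finset ι) {F : ι → M → ℝ} (h : ∀ i ∈ s, ConvexOn ℝ Set.univ (F i)) :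
    ConvexOn ℝ Set.univ (fun z => ∑ i ∈ s, F i z) := by
  classical
  induction s using Finset.induction_on with
  | empty => simpa using convexOn_const (0:ℝ) convex_univ
  | @insert a s ha ih =>
    simp only [Finset.sum_insert ha]
    exact (h a (Finset.mem_insert_self a s)).add
      (ih fun i hi => h i (Finset.mem_insert_of_mem hi))

/-- Convexity of the column-fidelity term. -/
lemma col_term_convex {d n : ℕ} (X : Matrix (Fin d) (Fin n) ℝ) (μ : ℝ) {q : ℝ}
    (hq : 1 ≤ q) (i : Fin n) :
    ConvexOn ℝ Set.univ
      (fun Z : Matrix (Fin n) (Fin n) ℝ =>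
        (∑ j, ((X * Z - X) j i) ^ 2 + μ ^ 2) ^ (q / 2)) := by
  classical
  set L : Matrix (Fin n) (Fin n) ℝ →ₗ[ℝ] ((Fin d ⊕ Unit) → ℝ) :=
    { toFun := fun Z => Sum.elim (fun j' => (X * Z) j' i) (fun _ => 0)
      map_add' := by
        intro Z₁ Z₂; funext j; cases j <;> simp [Matrix.mul_add]
      map_smul' := by
        intro t Z; funext j; cases j <;> simp [Matrix.mul_smul] } with hL
  set T : Matrix (Fin n) (Fin n) ℝ →ₗ[ℝ] EuclideanSpace ℝ (Fin d ⊕ Unit) :=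
    ((WithLp.linearEquiv 2 ℝ ((Fin d ⊕ Unit) → ℝ)).symm.toLinearMap).comp L with hT
  set c : EuclideanSpace ℝ (Fin d ⊕ Unit) :=
    (WithLp.linearEquiv 2 ℝ ((Fin d ⊕ Unit) → ℝ)).symm
      (Sum.elim (fun j' => - X j' i) (fun _ => μ)) with hc
  have key : ∀ Z : Matrix (Fin n) (Fin n) ℝ,
      (∑ j, ((X * Z - X) j i) ^ 2 + μ ^ 2) ^ (q / 2) = ‖T Z + c‖ ^ q := by
    intro Z
    have happ : ∀ j, (T Z + c) j
        = Sum.elim (fun j' => (X * Z) j' i - X j' i) (fun _ => μ) j := by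
      intro j
      cases j <;>
        simp [hT, hc, hL, PiLp.add_apply, WithLp.linearEquiv, sub_eq_add_neg]
    have h0 : (0:ℝ) ≤ ∑ j, ((X * Z - X) j i) ^ 2 + μ ^ 2 := by positivity
    rw [EuclideanSpace.norm_eq]
    have hsum : ∑ j, ‖(T Z + c) j‖ ^ 2 = ∑ j, ((X * Z - X) j i) ^ 2 + μ ^ 2 := by
      rw [Fintype.sum_sum_type]
      simp only [happ, Sum.elim_inl, Sum.elim_inr, Real.norm_eq_abs, sq_abs]
      simp [Matrix.sub_apply]
    rw [hsum, Real.sqrt_eq_rpow, ← Real.rpow_mul h0, show (1/(2:ℝ))*q = q/2 by ring]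
  simp only [key]
  exact norm_affine_rpow_convex T c hq

/-! ### Block matrices -/

lemma trace_fromBlocks (A B C D : Matrix m m ℝ) :
    (fromBlocks A B C D).trace = A.trace + D.trace := by
  simp only [Matrix.trace, Matrix.diag]
  rw [Fintype.sum_sum_type]
  rfl

lemma fromBlocks_diag_pow (A B : Matrix m m ℝ) (k : ℕ) :
    (fromBlocks A 0 0 B) ^ k = fromBlocks (A ^ k) 0 0 (B ^ k) := by
  induction k with
  | zero => simp [pow_zero, fromBlocks_one]
  | succ k ih =>
    rw [pow_succ, ih, pow_succ, pow_succ, fromBlocks_multiply]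
    simp

lemma trace_pow_mul_comm (A B : Matrix m m ℝ) (k : ℕ) :
    ((A * B) ^ k).trace = ((B * A) ^ k).trace := by
  cases k with
  | zero => simp
  | succ k =>
    have key : ∀ j : ℕ, (A * B) ^ j * A = A * (B * A) ^ j := by
      intro j
      induction j with
      | zero => simp
      | succ j ih =>
        calc (A * B) ^ (j+1) * A = (A * B) * ((A * B) ^ j * A) := by
              rw [pow_succ']; rw [mul_assoc]
          _ = (A * B) * (A * (B * A) ^ j) := by rw [ih]
          _ = A * ((B * A) * (B * A) ^ j) := by simp only [mul_assoc]
          _ = A * (B * A) ^ (j+1) := by rw [← pow_succ']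
    calc ((A * B) ^ (k+1)).trace = ((A * B) ^ k * A * B).trace := by
          rw [pow_succ, mul_assoc]
      _ = (B * ((A * B) ^ k * A)).trace := by rw [Matrix.trace_mul_comm]
      _ = (B * (A * (B * A) ^ k)).trace := by rw [key]
      _ = ((B * A) ^ (k+1)).trace := by
          rw [pow_succ', mul_assoc]

/-! ### The symmetric dilation of a square matrix -/

variable {n : ℕ}

noncomputable def Dmat (Z : Matrix (Fin n) (Fin n) ℝ) :
    Matrix (Fin n ⊕ Fin n) (Fin n ⊕ Fin n) ℝ := fromBlocks 0 Zᵀ Z 0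

lemma isHermitian_Dmat (Z : Matrix (Fin n) (Fin n) ℝ) : (Dmat Z).IsHermitian := by
  unfold Dmat Matrix.IsHermitian
  rw [Matrix.fromBlocks_conjTranspose]
  simp [conjTranspose_eq_transpose_of_trivial]

lemma Dmat_sq (Z : Matrix (Fin n) (Fin n) ℝ) :
    Dmat Z ^ 2 = fromBlocks (Zᵀ * Z) 0 0 (Z * Zᵀ) := by
  rw [sq]
  unfold Dmat
  rw [fromBlocks_multiply]
  simp

lemma Dmat_smul (a : ℝ) (Z : Matrix (Fin n) (Fin n) ℝ) : Dmat (a • Z) = a • Dmat Z := by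
  unfold Dmat
  rw [Matrix.transpose_smul, fromBlocks_smul]
  simp

lemma Dmat_add (Z₁ Z₂ : Matrix (Fin n) (Fin n) ℝ) : Dmat (Z₁ + Z₂) = Dmat Z₁ + Dmat Z₂ := by
  unfold Dmat
  rw [Matrix.transpose_add, fromBlocks_add]
  simp

lemma isHermitian_WB (Z : Matrix (Fin n) (Fin n) ℝ) (μ : ℝ) :
    (Zᵀ * Z + μ ^ 2 • (1 : Matrix (Fin n) (Fin n) ℝ)).IsHermitian := by
  have hW : (Zᵀ * Z).IsHermitian := by
    simpa [conjTranspose_eq_transpose_of_trivial] using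
      Matrix.isHermitian_conjTranspose_mul_self Z
  have h1 : ((μ ^ 2 : ℝ) • (1 : Matrix (Fin n) (Fin n) ℝ)).IsHermitian := by
    rw [Matrix.smul_one_eq_diagonal]
    exact Matrix.isHermitian_diagonal _
  exact hW.add h1

/-- The key identity: twice the trace of `mpow (ZᵀZ + μ²I) r` equals the trace of
`f(D)` where `D` is the symmetric dilation of `Z` and `f x = (x² + μ²)^r`. -/
lemma two_mul_trace_mpow (Z : Matrix (Fin n) (Fin n) ℝ) (μ r : ℝ) :
    2 * (mpow (Zᵀ * Z + μ ^ 2 • (1 : Matrix (Fin n) (Fin n) ℝ)) r).trace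
      = ((isHermitian_Dmat Z).cfc (fun x => (x ^ 2 + μ ^ 2) ^ r)).trace := by
  classical
  have hW : (Zᵀ * Z).IsHermitian := by
    simpa [conjTranspose_eq_transpose_of_trivial] using
      Matrix.isHermitian_conjTranspose_mul_self Z
  have hW' : (Z * Zᵀ).IsHermitian := by
    simpa [conjTranspose_eq_transpose_of_trivial] using
      Matrix.isHermitian_mul_conjTranspose_self Z
  have hB := isHermitian_WB Z μ
  have hD := isHermitian_Dmat Z
  -- B as cfc of W
  have hBcfc : Zᵀ * Z + μ ^ 2 • (1 : Matrix (Fin n) (Fin n) ℝ)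
      = hW.cfc (fun x => x + μ ^ 2) := by
    set U : Matrix (Fin n) (Fin n) ℝ :=
      (hW.eigenvectorUnitary : Matrix (Fin n) (Fin n) ℝ) with hU
    have hUu' : U * star U = 1 := Unitary.mul_star_self_of_mem (SetLike.coe_mem _)
    rw [Matrix.IsHermitian.cfc]
    have hfun : (RCLike.ofReal ∘ (fun x : ℝ => x + μ ^ 2) ∘ hW.eigenvalues)
        = fun i => (RCLike.ofReal ∘ hW.eigenvalues) i + (fun _ : Fin n => μ ^ 2) i := by
      funext i; simp
    have hdg : diagonal (RCLike.ofReal ∘ (fun x : ℝ => x + μ ^ 2) ∘ hW.eigenvalues)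
        = diagonal (RCLike.ofReal ∘ hW.eigenvalues)
          + (μ ^ 2 : ℝ) • (1 : Matrix (Fin n) (Fin n) ℝ) := by
      rw [hfun, ← diagonal_add, Matrix.smul_one_eq_diagonal]
    rw [hdg, Unitary.conjStarAlgAut_apply, Matrix.mul_add, Matrix.add_mul]
    congr 1
    · exact hW.spectral_theorem.trans (Unitary.conjStarAlgAut_apply _ _)
    · rw [Matrix.mul_smul, mul_one, Matrix.smul_mul, hUu']
  -- power sums
  have e1 : ∀ k : ℕ, ∑ i, hB.eigenvalues i ^ k = ∑ i, (hW.eigenvalues i + μ ^ 2) ^ k := by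
    intro k
    have l1 := trace_pow_eq hB k
    have l2 : ((Zᵀ * Z + μ ^ 2 • (1 : Matrix (Fin n) (Fin n) ℝ)) ^ k).trace
        = ∑ i, (hW.eigenvalues i + μ ^ 2) ^ k := by
      rw [hBcfc, ← cfc_pow, cfc_trace]
    rw [← l1, l2]
  have s1 := sum_apply_eq_of_power_sums hB.eigenvalues
    (fun i => hW.eigenvalues i + μ ^ 2) e1 (fun t => t ^ r)
  have e3 : ∀ k : ℕ, ∑ i, hW'.eigenvalues i ^ k = ∑ i, hW.eigenvalues i ^ k := by
    intro k
    rw [← trace_pow_eq hW', ← trace_pow_eq hW]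
    exact trace_pow_mul_comm Z Zᵀ k
  have s3 := sum_apply_eq_of_power_sums hW'.eigenvalues hW.eigenvalues e3
    (fun t => (t + μ ^ 2) ^ r)
  have e2 : ∀ k : ℕ, ∑ j, ((hD.eigenvalues j) ^ 2) ^ k
      = ∑ j, (Sum.elim hW.eigenvalues hW'.eigenvalues j) ^ k := by
    intro k
    have lhs1 : ∑ j, ((hD.eigenvalues j) ^ 2) ^ k = (Dmat Z ^ (2 * k)).trace := by
      rw [trace_pow_eq hD (2 * k)]
      congr 1; funext j; rw [← pow_mul]
    have rhs1 : (Dmat Z ^ (2 * k)).trace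
        = ∑ j, (Sum.elim hW.eigenvalues hW'.eigenvalues j) ^ k := by
      rw [pow_mul, Dmat_sq, fromBlocks_diag_pow, trace_fromBlocks,
        trace_pow_eq hW, trace_pow_eq hW', Fintype.sum_sum_type]
      simp
    rw [lhs1, rhs1]
  have s2 := sum_apply_eq_of_power_sums (fun j => hD.eigenvalues j ^ 2)
    (Sum.elim hW.eigenvalues hW'.eigenvalues) e2 (fun t => (t + μ ^ 2) ^ r)
  -- assemble
  have hmp : (mpow (Zᵀ * Z + μ ^ 2 • (1 : Matrix (Fin n) (Fin n) ℝ)) r).trace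
      = ∑ i, (hB.eigenvalues i) ^ r := by
    rw [mpow, dif_pos hB, cfc_trace]
  calc 2 * (mpow (Zᵀ * Z + μ ^ 2 • (1 : Matrix (Fin n) (Fin n) ℝ)) r).trace
      = 2 * ∑ i, hB.eigenvalues i ^ r := by rw [hmp]
    _ = 2 * ∑ i, (hW.eigenvalues i + μ ^ 2) ^ r := by rw [s1]
    _ = (∑ i, (hW.eigenvalues i + μ ^ 2) ^ r)
        + ∑ i, (hW'.eigenvalues i + μ ^ 2) ^ r := by rw [s3]; ring
    _ = ∑ j, ((Sum.elim hW.eigenvalues hW'.eigenvalues j) + μ ^ 2) ^ r := by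
        rw [Fintype.sum_sum_type]; simp
    _ = ∑ j, ((hD.eigenvalues j) ^ 2 + μ ^ 2) ^ r := by rw [← s2]
    _ = ((isHermitian_Dmat Z).cfc (fun x => (x ^ 2 + μ ^ 2) ^ r)).trace :=
        (cfc_trace hD (fun x => (x ^ 2 + μ ^ 2) ^ r)).symm

end SmoothLRR

/-- **Theorem 1 (convexity in `Z` for fixed `μ`).** For `1 ≤ p, q ≤ 2`, `λ > 0` and fixed
`μ ∈ ℝ`, the function `Z ↦ Tr((ZᵀZ + μ²I)^{p/2}) + λ·∑ᵢ (‖(XZ − X)ᵢ‖₂² + μ²)^{q/2}` is convex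
on `ℝ^{n×n}`. -/
theorem stmt_10 {d n : ℕ} (X : Matrix (Fin d) (Fin n) ℝ) (lam p q μ : ℝ)
    (hlam : 0 < lam) (hp1 : 1 ≤ p) (hp2 : p ≤ 2) (hq1 : 1 ≤ q) (hq2 : q ≤ 2) :
    ConvexOn ℝ Set.univ
      (fun Z : Matrix (Fin n) (Fin n) ℝ => smoothJ X lam p q Z μ) := by
  classical
  have hf : ConvexOn ℝ Set.univ (fun x : ℝ => (x ^ 2 + μ ^ 2) ^ (p / 2)) :=
    SmoothLRR.sq_add_rpow_convex μ hp1
  have hG : ConvexOn ℝ Set.univ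
      (fun Z : Matrix (Fin n) (Fin n) ℝ =>
        ((SmoothLRR.isHermitian_Dmat Z).cfc (fun x => (x ^ 2 + μ ^ 2) ^ (p / 2))).trace) := by
    refine ⟨convex_univ, fun Z₁ _ Z₂ _ a b ha hb hab => ?_⟩
    have hCeq : SmoothLRR.Dmat (a • Z₁ + b • Z₂)
        = a • SmoothLRR.Dmat Z₁ + b • SmoothLRR.Dmat Z₂ := by
      rw [SmoothLRR.Dmat_add, SmoothLRR.Dmat_smul, SmoothLRR.Dmat_smul]
    have := SmoothLRR.trace_cfc_convex (SmoothLRR.isHermitian_Dmat Z₁)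
      (SmoothLRR.isHermitian_Dmat Z₂) (SmoothLRR.isHermitian_Dmat (a • Z₁ + b • Z₂))
      ha hb hab hCeq hf
    simpa [smul_eq_mul] using this
  have h1 : ConvexOn ℝ Set.univ
      (fun Z : Matrix (Fin n) (Fin n) ℝ =>
        (mpow (Zᵀ * Z + μ ^ 2 • (1 : Matrix (Fin n) (Fin n) ℝ)) (p / 2)).trace) := by
    have h2 := hG.smul (by norm_num : (0:ℝ) ≤ (2:ℝ)⁻¹)
    refine SmoothLRR.convexOn_congr h2 ?_
    intro Z
    have hkey := SmoothLRR.two_mul_trace_mpow Z μ (p / 2)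
    rw [smul_eq_mul]
    linarith
  have h2 : ConvexOn ℝ Set.univ
      (fun Z : Matrix (Fin n) (Fin n) ℝ =>
        lam * ∑ i, (∑ j, ((X * Z - X) j i) ^ 2 + μ ^ 2) ^ (q / 2)) := by
    have hs := SmoothLRR.convexOn_finset_sum Finset.univ
      (fun i _ => SmoothLRR.col_term_convex X μ hq1 i)
    have hsm := hs.smul hlam.le
    exact SmoothLRR.convexOn_congr hsm (fun Z => by rw [smul_eq_mul])
  exact SmoothLRR.convexOn_congr (h1.add h2) (fun Z => rfl)
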